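/- Let 𝒜 be a finite set with |𝒜| = K where 2 ≤ K, let T ∈ ℕ with K ≤ T, and let T_S : 𝒜 → ℕ. Suppose (τ*, n*) is an optimal solution for the LP (with T_S regarded as real-valued and budget T). Then for every N : 𝒜 → ℕ with ∑_{a∈𝒜} N(a) = T, one has ∑_{a∈𝒜} ∑_{k=1}^{N(a)} 1/√(k + T_S(a)) ≤ 8·T/√τ*. -/

import Mathlib

/-- `(τ, n)` is a feasible pair for the LP with offline sample sizes `TS` and budget `T`. -/
def LPfeasible {α : Type*} [Fintype α] (TS : α → ℝ) (T : ℝ) (τ : ℝ) (n : α → ℝ) : Prop :=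
  0 ≤ τ ∧ (∀ a, 0 ≤ n a) ∧ (∑ a, n a) = T ∧ ∀ a, τ ≤ TS a + n a

lemma sum_inv_sqrt_le (S : ℝ) (hS : 0 ≤ S) (N : ℕ) :
    ∑ k ∈ Finset.Icc 1 N, 1 / Real.sqrt ((k : ℝ) + S) ≤ 2 * Real.sqrt ((N : ℝ) + S) := by
  induction N with
  | zero => simp [Real.sqrt_nonneg]
  | succ n ih =>
    rw [Finset.sum_Icc_succ_top (by omega)]
    have hx : (0:ℝ) ≤ (n:ℝ) + S := by positivity
    have hy : (0:ℝ) < (n:ℝ) + 1 + S := by positivity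
    have hx0 : 0 ≤ Real.sqrt ((n:ℝ) + S) := Real.sqrt_nonneg _
    have hy0 : 0 < Real.sqrt ((n:ℝ) + 1 + S) := Real.sqrt_pos.mpr hy
    have hx2 : Real.sqrt ((n:ℝ) + S) ^ 2 = (n:ℝ) + S := Real.sq_sqrt hx
    have hy2 : Real.sqrt ((n:ℝ) + 1 + S) ^ 2 = (n:ℝ) + 1 + S := Real.sq_sqrt hy.le
    have hxy : Real.sqrt ((n:ℝ) + S) ≤ Real.sqrt ((n:ℝ) + 1 + S) :=
      Real.sqrt_le_sqrt (by linarith)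
    have hcast : ((n+1 : ℕ) : ℝ) + S = (n:ℝ) + 1 + S := by push_cast; ring
    have key : 1 / Real.sqrt (((n+1 : ℕ) : ℝ) + S) ≤
        2 * Real.sqrt ((n:ℝ) + 1 + S) - 2 * Real.sqrt ((n:ℝ) + S) := by
      rw [hcast, div_le_iff₀ hy0]
      nlinarith
    have : (((n+1 : ℕ) : ℝ)) + S = (n:ℝ) + 1 + S := hcast
    calc ∑ k ∈ Finset.Icc 1 n, 1 / Real.sqrt ((k : ℝ) + S)
          + 1 / Real.sqrt (((n+1 : ℕ) : ℝ) + S)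
        ≤ 2 * Real.sqrt ((n:ℝ) + S) +
          (2 * Real.sqrt ((n:ℝ) + 1 + S) - 2 * Real.sqrt ((n:ℝ) + S)) := by
          exact add_le_add ih key
      _ = 2 * Real.sqrt ((n:ℝ) + 1 + S) := by ring
      _ = 2 * Real.sqrt (((n+1 : ℕ) : ℝ) + S) := by rw [hcast]

lemma arm_bound (τ : ℝ) (hτ : 1 ≤ τ) (S n : ℝ) (hS : 0 ≤ S) (hn : 0 ≤ n)
    (hle : τ ≤ S + n) (N : ℕ) :
    ∑ k ∈ Finset.Icc 1 N, 1 / Real.sqrt ((k : ℝ) + S) ≤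
      2 * Real.sqrt 2 * ((N : ℝ) + n) / Real.sqrt τ := by
  have hτ0 : (0:ℝ) < τ := by linarith
  have hs : 0 < Real.sqrt τ := Real.sqrt_pos.mpr hτ0
  have h2nn : (0:ℝ) ≤ Real.sqrt 2 := Real.sqrt_nonneg 2
  have hN0 : (0:ℝ) ≤ (N:ℝ) := Nat.cast_nonneg _
  by_cases h : τ / 2 ≤ S
  · -- every term is at most √2/√τ
    have hterm : ∀ k ∈ Finset.Icc 1 N,
        1 / Real.sqrt ((k : ℝ) + S) ≤ Real.sqrt 2 / Real.sqrt τ := by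
      intro k hk
      have hk1 : 1 ≤ k := (Finset.mem_Icc.mp hk).1
      have hk1' : (1:ℝ) ≤ (k:ℝ) := by exact_mod_cast hk1
      have hkS : (0:ℝ) < (k:ℝ) + S := by linarith
      have h2 : Real.sqrt τ ≤ Real.sqrt 2 * Real.sqrt ((k:ℝ) + S) := by
        rw [← Real.sqrt_mul (by norm_num)]
        exact Real.sqrt_le_sqrt (by linarith)
      rw [div_le_div_iff₀ (Real.sqrt_pos.mpr hkS) hs]
      linarith
    calc ∑ k ∈ Finset.Icc 1 N, 1 / Real.sqrt ((k : ℝ) + S)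
        ≤ ∑ _k ∈ Finset.Icc 1 N, Real.sqrt 2 / Real.sqrt τ := Finset.sum_le_sum hterm
      _ = (N : ℝ) * (Real.sqrt 2 / Real.sqrt τ) := by
          rw [Finset.sum_const, Nat.card_Icc]
          simp [nsmul_eq_mul]
      _ = (N : ℝ) * Real.sqrt 2 / Real.sqrt τ := by ring
      _ ≤ 2 * Real.sqrt 2 * ((N : ℝ) + n) / Real.sqrt τ :=
          (div_le_div_iff_of_pos_right hs).mpr (by nlinarith)
  · push_neg at h
    have hn2 : τ / 2 ≤ n := by linarith
    set x : ℝ := (N : ℝ) + n with hxdef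
    have hx0 : (0:ℝ) ≤ x := by positivity
    have hxτ : τ ≤ 2 * x := by
      have : τ / 2 ≤ x := by simp [hxdef]; linarith
      linarith
    have hmain : Real.sqrt x * Real.sqrt τ ≤ Real.sqrt 2 * x := by
      rw [← Real.sqrt_mul hx0]
      calc Real.sqrt (x * τ) ≤ Real.sqrt (2 * (x * x)) :=
            Real.sqrt_le_sqrt (by nlinarith)
        _ = Real.sqrt 2 * Real.sqrt (x * x) := Real.sqrt_mul (by norm_num) _
        _ = Real.sqrt 2 * x := by rw [Real.sqrt_mul_self hx0]
    calc ∑ k ∈ Finset.Icc 1 N, 1 / Real.sqrt ((k : ℝ) + S)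
        ≤ 2 * Real.sqrt ((N : ℝ) + S) := sum_inv_sqrt_le S hS N
      _ ≤ 2 * Real.sqrt x := by
          have : (N : ℝ) + S ≤ x := by simp [hxdef]; linarith
          have := Real.sqrt_le_sqrt this
          linarith
      _ ≤ 2 * Real.sqrt 2 * x / Real.sqrt τ := by
          rw [le_div_iff₀ hs]
          nlinarith
      _ = 2 * Real.sqrt 2 * ((N : ℝ) + n) / Real.sqrt τ := by rw [hxdef]

/-- Sum of warm-start confidence radii along any realization of arm pull counts is at most
`8 T / √τ*`. -/
theorem warm_start_radii_sum_bound
    {α : Type*} [Fintype α]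
    (K : ℕ) (hK : Fintype.card α = K) (h2K : 2 ≤ K)
    (T : ℕ) (hKT : K ≤ T) (TS : α → ℕ)
    (τstar : ℝ) (nstar : α → ℝ)
    (hfeas : LPfeasible (fun a => (TS a : ℝ)) (T : ℝ) τstar nstar)
    (hopt : ∀ τ n, LPfeasible (fun a => (TS a : ℝ)) (T : ℝ) τ n → τ ≤ τstar) :
    ∀ N : α → ℕ, ∑ a, N a = T →
      ∑ a, ∑ k ∈ Finset.Icc 1 (N a), 1 / Real.sqrt ((k : ℝ) + (TS a : ℝ)) ≤
        8 * (T : ℝ) / Real.sqrt τstar := by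
  obtain ⟨hτ0, hn0, hnsum, hτle⟩ := hfeas
  intro N hN
  have hK0 : (0:ℝ) < (K:ℝ) := by exact_mod_cast (by omega : 0 < K)
  have hKT' : (K:ℝ) ≤ (T:ℝ) := by exact_mod_cast hKT
  have hfeas2 : LPfeasible (fun a => (TS a : ℝ)) (T : ℝ) ((T:ℝ)/K) (fun _ => (T:ℝ)/K) := by
    refine ⟨by positivity, fun a => by positivity, ?_, fun a => ?_⟩
    · rw [Finset.sum_const, Finset.card_univ, hK, nsmul_eq_mul]
      field_simp
    · have : (0:ℝ) ≤ (TS a : ℝ) := Nat.cast_nonneg _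
      simp only []
      linarith
  have hτK : (T:ℝ)/K ≤ τstar := hopt _ _ hfeas2
  have h1τ : (1:ℝ) ≤ τstar := le_trans ((one_le_div hK0).mpr hKT') hτK
  have hs : 0 < Real.sqrt τstar := Real.sqrt_pos.mpr (by linarith)
  have h2nn : (0:ℝ) ≤ Real.sqrt 2 := Real.sqrt_nonneg 2
  have harm : ∀ a, ∑ k ∈ Finset.Icc 1 (N a), 1 / Real.sqrt ((k : ℝ) + (TS a : ℝ)) ≤
      2 * Real.sqrt 2 * ((N a : ℝ) + nstar a) / Real.sqrt τstar := by
    intro a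
    exact arm_bound τstar h1τ (TS a : ℝ) (nstar a) (Nat.cast_nonneg _) (hn0 a) (hτle a) (N a)
  have hsum : ∑ a, ∑ k ∈ Finset.Icc 1 (N a), 1 / Real.sqrt ((k : ℝ) + (TS a : ℝ)) ≤
      ∑ a, 2 * Real.sqrt 2 * ((N a : ℝ) + nstar a) / Real.sqrt τstar :=
    Finset.sum_le_sum fun a _ => harm a
  have hNsum : ∑ a, ((N a : ℝ)) = (T : ℝ) := by exact_mod_cast hN
  have heq : ∑ a, 2 * Real.sqrt 2 * ((N a : ℝ) + nstar a) / Real.sqrt τstar =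
      2 * Real.sqrt 2 * ((T:ℝ) + (T:ℝ)) / Real.sqrt τstar := by
    rw [← Finset.sum_div, ← Finset.mul_sum, Finset.sum_add_distrib, hNsum, hnsum]
  have hT0 : (0:ℝ) ≤ (T:ℝ) := Nat.cast_nonneg _
  have hsqrt2 : Real.sqrt 2 ≤ 2 := by
    nlinarith [Real.sq_sqrt (by norm_num : (0:ℝ) ≤ 2), Real.sqrt_nonneg 2]
  have hfinal : 2 * Real.sqrt 2 * ((T:ℝ) + (T:ℝ)) / Real.sqrt τstar ≤
      8 * (T:ℝ) / Real.sqrt τstar := by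
    apply (div_le_div_iff_of_pos_right hs).mpr
    nlinarith
  calc ∑ a, ∑ k ∈ Finset.Icc 1 (N a), 1 / Real.sqrt ((k : ℝ) + (TS a : ℝ))
      ≤ ∑ a, 2 * Real.sqrt 2 * ((N a : ℝ) + nstar a) / Real.sqrt τstar := hsum
    _ = 2 * Real.sqrt 2 * ((T:ℝ) + (T:ℝ)) / Real.sqrt τstar := heq
    _ ≤ 8 * (T:ℝ) / Real.sqrt τstar := hfinal
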